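/- Consider the dual dynamics ρ̇_{l1} = [ĉ_{l1}w_l]⁺_{ρ_{l1}}, ρ̇_{lp} = [-â_{lp}ρ_{lp} + ĉ_{lp}w_l]⁺_{ρ_{lp}} (p = 2,…,m_l), λ_l = Σ_p ρ_{lp} + d̂_l·max{0, w_l}, with w = g(x), all ĉ_{lp} > 0, â_{lp} > 0 (p ≥ 2), d̂_l ≥ 0, and ρ(0) ≥ 0. Then along trajectories with ρ ≥ 0, U := Σ_l [(1/(2ĉ_{l1}))|ρ_{l1} - λ_l*|² + Σ_{p≥2}(1/(2ĉ_{lp}))ρ_{lp}²] satisfies U̇ ≤ (λ - λ*)ᵀg(x) - Σ_l(d̂_l max{0,w_l}² + Σ_{p≥2}(â_{lp}/ĉ_{lp})ρ_{lp}²). -/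

import Mathlib

open Finset

/-- The projection operator keeping the dual variable nonnegative. -/
noncomputable def proj (σ ρ : ℝ) : ℝ := if ρ = 0 ∧ σ < 0 then 0 else σ

/-- Passivity estimate for the inequality-constraint dual block: along trajectories
 with ρ ≥ 0, the storage U satisfies
 U̇ ≤ (λ - λ*)ᵀ g(x) - Σ_l (d̂_l max{0,w_l}² + Σ_{p≥2} (â_{lp}/ĉ_{lp}) ρ_{lp}²). -/
theorem stmt_10 {n m : ℕ} {M : Fin m → ℕ}
    (g : Fin m → EuclideanSpace ℝ (Fin n) → ℝ)
    (gradg : Fin m → EuclideanSpace ℝ (Fin n) → EuclideanSpace ℝ (Fin n))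
    (hg : ∀ l, ConvexOn ℝ Set.univ (g l))
    (hg' : ∀ l x, HasGradientAt (g l) (gradg l x) x)
    (xs : EuclideanSpace ℝ (Fin n)) (lams : Fin m → ℝ)
    (hlams : ∀ l, 0 ≤ lams l) (hineqs : ∀ l, g l xs ≤ 0) (hcomp : ∀ l, lams l * g l xs = 0)
    (c a : (l : Fin m) → Fin (M l + 1) → ℝ) (d : Fin m → ℝ)
    (hc : ∀ l p, 0 < c l p) (ha : ∀ l p, p ≠ 0 → 0 < a l p) (hd : ∀ l, 0 ≤ d l)
    (x : ℝ → EuclideanSpace ℝ (Fin n)) (w : Fin m → ℝ → ℝ)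
    (hw : ∀ l t, w l t = g l (x t))
    (ρ : (l : Fin m) → Fin (M l + 1) → ℝ → ℝ) (lam : Fin m → ℝ → ℝ)
    (hρpos : ∀ l p t, 0 ≤ ρ l p t)
    (hdyn0 : ∀ l t, HasDerivAt (ρ l 0) (proj (c l 0 * w l t) (ρ l 0 t)) t)
    (hdyn : ∀ l, ∀ p, p ≠ 0 → ∀ t,
      HasDerivAt (ρ l p) (proj (-a l p * ρ l p t + c l p * w l t) (ρ l p t)) t)
    (hlam : ∀ l t, lam l t = (∑ p, ρ l p t) + d l * max 0 (w l t))
    (U : ℝ → ℝ)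
    (hU : ∀ t, U t = ∑ l, ((1 / (2 * c l 0)) * (ρ l 0 t - lams l) ^ 2
        + ∑ p ∈ univ.erase 0, (1 / (2 * c l p)) * (ρ l p t) ^ 2)) :
    ∀ t, ∃ D : ℝ, HasDerivAt U D t ∧
      D ≤ (∑ l, (lam l t - lams l) * g l (x t))
          - ∑ l, (d l * (max 0 (w l t)) ^ 2
              + ∑ p ∈ univ.erase 0, (a l p / c l p) * (ρ l p t) ^ 2) := by
  intro t
  refine ⟨∑ l, ((1 / (2 * c l 0)) * ((2:ℝ) * (ρ l 0 t - lams l) ^ 1 *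
        proj (c l 0 * w l t) (ρ l 0 t))
      + ∑ p ∈ univ.erase 0, (1 / (2 * c l p)) * ((2:ℝ) * (ρ l p t) ^ 1 *
        proj (-a l p * ρ l p t + c l p * w l t) (ρ l p t))), ?_, ?_⟩
  · have hUe : U = fun s => ∑ l, ((1 / (2 * c l 0)) * (ρ l 0 s - lams l) ^ 2
        + ∑ p ∈ univ.erase 0, (1 / (2 * c l p)) * (ρ l p s) ^ 2) := funext hU
    rw [hUe]
    refine HasDerivAt.fun_sum fun l _ => HasDerivAt.add ?_ (HasDerivAt.fun_sum fun p hp => ?_)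
    · exact (((hdyn0 l t).sub_const (lams l)).pow 2).const_mul _
    · exact ((hdyn l p (Finset.ne_of_mem_erase hp) t).pow 2).const_mul _
  · have key : ∀ l : Fin m,
        (1 / (2 * c l 0)) * ((2:ℝ) * (ρ l 0 t - lams l) ^ 1 *
          proj (c l 0 * w l t) (ρ l 0 t))
        + ∑ p ∈ univ.erase 0, (1 / (2 * c l p)) * ((2:ℝ) * (ρ l p t) ^ 1 *
          proj (-a l p * ρ l p t + c l p * w l t) (ρ l p t))
        ≤ (lam l t - lams l) * g l (x t)
          - (d l * (max 0 (w l t)) ^ 2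
            + ∑ p ∈ univ.erase 0, (a l p / c l p) * (ρ l p t) ^ 2) := by
      intro l
      have hc0 := hc l 0
      have hmax : max 0 (w l t) * w l t = (max 0 (w l t)) ^ 2 := by
        rcases le_or_gt 0 (w l t) with h | h
        · rw [max_eq_right h]; ring
        · rw [max_eq_left h.le]; ring
      have hsum : (∑ p, ρ l p t) = ρ l 0 t + ∑ p ∈ univ.erase 0, ρ l p t :=
        (Finset.add_sum_erase univ (fun p => ρ l p t) (mem_univ 0)).symm
      have hterm : ∀ p ∈ univ.erase (0 : Fin (M l + 1)),
          (1 / (2 * c l p)) * ((2:ℝ) * (ρ l p t) ^ 1 *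
            proj (-a l p * ρ l p t + c l p * w l t) (ρ l p t))
          = ρ l p t * w l t - (a l p / c l p) * (ρ l p t) ^ 2 := by
        intro p hp
        have hcp := (hc l p).ne'
        unfold proj
        split_ifs with h
        · rw [h.1]; ring
        · field_simp; ring
      rw [Finset.sum_congr rfl hterm, hlam, hsum, ← hw l t]
      have h0 : (1 / (2 * c l 0)) * ((2:ℝ) * (ρ l 0 t - lams l) ^ 1 *
          proj (c l 0 * w l t) (ρ l 0 t)) ≤ (ρ l 0 t - lams l) * w l t := by
        unfold proj
        split_ifs with h
        · have hwneg : w l t < 0 := by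
            by_contra hcon
            exact absurd (mul_nonneg hc0.le (not_lt.mp hcon)) (not_le.mpr h.2)
          rw [h.1]
          nlinarith [hlams l, hwneg]
        · have : (1 / (2 * c l 0)) * ((2:ℝ) * (ρ l 0 t - lams l) ^ 1 *
              (c l 0 * w l t)) = (ρ l 0 t - lams l) * w l t := by
            field_simp
          linarith
      have hsum2 : (∑ p ∈ univ.erase (0 : Fin (M l + 1)),
          (ρ l p t * w l t - (a l p / c l p) * (ρ l p t) ^ 2))
          = (∑ p ∈ univ.erase 0, ρ l p t) * w l t
            - ∑ p ∈ univ.erase 0, (a l p / c l p) * (ρ l p t) ^ 2 := by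
        rw [Finset.sum_sub_distrib, Finset.sum_mul]
      rw [hsum2]
      have hdm : d l * (0 ⊔ w l t) * w l t = d l * (0 ⊔ w l t) ^ 2 := by
        rw [mul_assoc, hmax]
      nlinarith [h0, hdm]
    calc _ ≤ ∑ l, ((lam l t - lams l) * g l (x t)
          - (d l * (max 0 (w l t)) ^ 2
            + ∑ p ∈ univ.erase 0, (a l p / c l p) * (ρ l p t) ^ 2)) :=
        Finset.sum_le_sum fun l _ => key l
      _ = _ := by rw [Finset.sum_sub_distrib]
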